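/- Abstract Babuška-Brezzi full stability: Let V and Q be normed spaces, a : V × V → R coercive on V with constant α > 0 and bounded with constant M_a, b : V × Q → R bounded with constant M_b and satisfying the inf-sup condition sup_{v≠0} b(v,q)/‖v‖ ≥ β‖q‖ for all q ∈ Q. Define B(r,s; v,q) = a(r,v) + b(v,s) + b(r,q). Then there exists a constant C > 0, depending only on α, β, M_a, M_b, such that for all (r,s) ∈ V × Q, sup_{(v,q)≠0} B(r,s; v,q)/(‖v‖ + ‖q‖) ≥ C(‖r‖ + ‖s‖). -/

import Mathlib

set_option maxHeartbeats 1600000 in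
/-- Abstract Babuška–Brezzi full stability: if `a` is coercive and bounded on `V`
and `b` is bounded on `V × Q` and satisfies the inf-sup condition, then the
combined form `B(r,s;v,q) = a(r,v) + b(v,s) + b(r,q)` satisfies a full
inf-sup stability estimate with a constant depending only on `α, β, M_a, M_b`. -/
theorem babuska_brezzi_full_stability
    {V Q : Type*} [NormedAddCommGroup V] [NormedSpace ℝ V] [Nontrivial V]
    [NormedAddCommGroup Q] [NormedSpace ℝ Q]
    (a : V →ₗ[ℝ] V →ₗ[ℝ] ℝ) (b : V →ₗ[ℝ] Q →ₗ[ℝ] ℝ)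
    (α Ma Mb β : ℝ) (hα : 0 < α) (hβ : 0 < β)
    (ha_coer : ∀ v, α * ‖v‖ ^ 2 ≤ a v v)
    (ha_bdd : ∀ u v, |a u v| ≤ Ma * ‖u‖ * ‖v‖)
    (hb_bdd : ∀ v q, |b v q| ≤ Mb * ‖v‖ * ‖q‖)
    (hb_infsup : ∀ q : Q, ∃ v : V, v ≠ 0 ∧ β * ‖q‖ * ‖v‖ ≤ b v q) :
    ∃ C > (0 : ℝ), ∀ (r : V) (s : Q), ∃ (v : V) (q : Q),
      ¬(v = 0 ∧ q = 0) ∧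
      C * (‖r‖ + ‖s‖) * (‖v‖ + ‖q‖) ≤ a r v + b v s + b r q := by
  obtain ⟨v₀, hv₀⟩ := exists_ne (0 : V)
  have hv₀n : (0:ℝ) < ‖v₀‖ := norm_pos_iff.mpr hv₀
  have hMa : 0 < Ma := by
    have h1 := ha_coer v₀
    have h2 := le_trans (le_abs_self _) (ha_bdd v₀ v₀)
    nlinarith [mul_pos hα (mul_pos hv₀n hv₀n), mul_pos hv₀n hv₀n]
  set δ : ℝ := α * β / Ma ^ 2 with hδdef
  have hδ : 0 < δ := by positivity
  have h1 : δ * Ma ^ 2 = α * β := by rw [hδdef, div_mul_cancel₀ _ (by positivity)]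
  set c₀ : ℝ := min (α / 2) (α * β ^ 2 / (2 * Ma ^ 2)) with hc₀def
  have hc₀ : 0 < c₀ := lt_min (by positivity) (by positivity)
  have hc₁ : c₀ * 2 ≤ α := by
    have := min_le_left (α / 2) (α * β ^ 2 / (2 * Ma ^ 2))
    nlinarith
  have hc₂ : c₀ * (2 * Ma ^ 2) ≤ α * β ^ 2 := by
    have h := min_le_right (α / 2) (α * β ^ 2 / (2 * Ma ^ 2))
    have h' : c₀ ≤ α * β ^ 2 / (2 * Ma ^ 2) := h
    rw [le_div_iff₀ (by positivity)] at h'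
    linarith
  set C : ℝ := c₀ / (2 * (1 + δ)) with hCdef
  have hC : 0 < C := by positivity
  have hC1 : C * (2 * (1 + δ)) = c₀ := by
    rw [hCdef, div_mul_cancel₀ _ (by positivity)]
  refine ⟨C, hC, ?_⟩
  intro r s
  by_cases hrs : r = 0 ∧ s = 0
  · refine ⟨v₀, 0, fun h => hv₀ h.1, ?_⟩
    obtain ⟨hr, hs⟩ := hrs
    subst hr; subst hs
    simp
  · obtain ⟨w₀, hw₀ne, hw₀⟩ := hb_infsup s
    have hw₀n : (0:ℝ) < ‖w₀‖ := norm_pos_iff.mpr hw₀ne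
    set w : V := (‖s‖ / ‖w₀‖) • w₀ with hwdef
    have hwn : ‖w‖ = ‖s‖ := by
      rw [hwdef, norm_smul, Real.norm_of_nonneg (by positivity)]
      field_simp
    have hbw : β * ‖s‖ ^ 2 ≤ b w s := by
      have hbws : b w s = (‖s‖ / ‖w₀‖) * b w₀ s := by
        rw [hwdef, map_smul]; simp
      rw [hbws]
      have hd : (0:ℝ) ≤ ‖s‖ / ‖w₀‖ := by positivity
      have hmul := mul_le_mul_of_nonneg_left hw₀ hd
      calc β * ‖s‖ ^ 2 = (‖s‖ / ‖w₀‖) * (β * ‖s‖ * ‖w₀‖) := by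
            field_simp
        _ ≤ (‖s‖ / ‖w₀‖) * b w₀ s := hmul
    refine ⟨r + δ • w, -s, ?_, ?_⟩
    · rintro ⟨hv, hq⟩
      have hs : s = 0 := by simpa [neg_eq_zero] using hq
      have hw0 : w = 0 := by
        have : ‖w‖ = 0 := by rw [hwn, hs, norm_zero]
        exact norm_eq_zero.mp this
      exact hrs ⟨by simpa [hw0] using hv, hs⟩
    · have hB : a r (r + δ • w) + b (r + δ • w) s + b r (-s)
          = a r r + δ * a r w + δ * b w s := by
        simp [map_add, map_smul, smul_eq_mul]
        ring
      rw [hB]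
      set R := ‖r‖ with hR
      set S := ‖s‖ with hS
      have hRn : 0 ≤ R := norm_nonneg r
      have hSn : 0 ≤ S := norm_nonneg s
      have harw : -(Ma * R * S) ≤ a r w := by
        have := (abs_le.mp (ha_bdd r w)).1
        rw [hwn] at this
        linarith
      have harr : α * R ^ 2 ≤ a r r := ha_coer r
      have hnorm : ‖r + δ • w‖ + ‖-s‖ ≤ R + δ * S + S := by
        have ha1 : ‖r + δ • w‖ ≤ R + δ * S := by
          calc ‖r + δ • w‖ ≤ ‖r‖ + ‖δ • w‖ := norm_add_le _ _
            _ = R + δ * S := by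
                rw [norm_smul, Real.norm_of_nonneg hδ.le, hwn]
        have ha2 : ‖-s‖ = S := norm_neg s
        linarith
      have hmain : C * (R + S) * (R + δ * S + S) ≤
          α * R ^ 2 - Ma * R * S * δ + δ * (β * S ^ 2) := by
        have step1 : C * (R + S) * (R + δ * S + S) ≤ c₀ * (R ^ 2 + S ^ 2) := by
          nlinarith [mul_nonneg hC.le (sq_nonneg (R - S)),
            mul_nonneg (mul_nonneg hC.le hδ.le) (sq_nonneg (R - S)),
            mul_nonneg (mul_nonneg hC.le hδ.le) (mul_nonneg hRn hSn),
            mul_nonneg (mul_nonneg hC.le hδ.le) (sq_nonneg R),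
            mul_nonneg (mul_nonneg hC.le hδ.le) (sq_nonneg S)]
        have e1 : (α * R ^ 2 - Ma * R * S * δ + δ * (β * S ^ 2)) * Ma ^ 2
            = α * Ma ^ 2 * R ^ 2 - α * β * Ma * R * S + α * β ^ 2 * S ^ 2 := by
          linear_combination (β * S ^ 2 - Ma * R * S) * h1
        have key' : c₀ * (R ^ 2 + S ^ 2) * Ma ^ 2 ≤
            (α * R ^ 2 - Ma * R * S * δ + δ * (β * S ^ 2)) * Ma ^ 2 := by
          rw [e1]
          nlinarith [mul_nonneg hα.le (sq_nonneg (Ma * R - β * S)),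
            mul_le_mul_of_nonneg_right hc₁ (sq_nonneg (Ma * R)),
            mul_le_mul_of_nonneg_right hc₂ (sq_nonneg S)]
        have step2 : c₀ * (R ^ 2 + S ^ 2) ≤
            α * R ^ 2 - Ma * R * S * δ + δ * (β * S ^ 2) :=
          (mul_le_mul_iff_of_pos_right (by positivity : (0:ℝ) < Ma ^ 2)).mp key'
        linarith
      have hfinal : C * (R + S) * (‖r + δ • w‖ + ‖-s‖) ≤
          C * (R + S) * (R + δ * S + S) :=
        mul_le_mul_of_nonneg_left hnorm (by positivity)
      have e2 := mul_le_mul_of_nonneg_left harw hδ.le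
      have e3 := mul_le_mul_of_nonneg_left hbw hδ.le
      nlinarith [hfinal, hmain, harr, e2, e3]
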